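/- Let H = ⊕_{i≥0} H_{(i)} be a graded Hopf algebra with B = H_{(0)}, π₀: H → B the projection and ι₀: B → H the inclusion. Define ω = id_H * (ι₀π₀S) (convolution product). Then R := {h ∈ H | (id⊗π₀)Δ(h) = h ⊗ 1} satisfies R = Im(ω) and Δ(R) ⊆ H ⊗ R, i.e. R is a left coideal subalgebra of H. -/

import Mathlib

open TensorProduct Coalgebra LinearMap

namespace Stmt14

variable {k H A B : Type*} [CommRing k] [Ring H] [HopfAlgebra k H]
  [Ring A] [Algebra k A] [Ring B] [Algebra k B]

/-- Convolution product on `H →ₗ[k] A`. -/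
noncomputable def cnv (f g : H →ₗ[k] A) : H →ₗ[k] A :=
  LinearMap.mul' k A ∘ₗ TensorProduct.map f g ∘ₗ comul

/-- Convolution unit. -/
noncomputable def cunit : H →ₗ[k] A := Algebra.linearMap k A ∘ₗ counit

lemma cnv_apply (f g : H →ₗ[k] A) (x : H) :
    cnv f g x = LinearMap.mul' k A (TensorProduct.map f g (comul x)) := rfl

lemma cnv_assoc (f g h : H →ₗ[k] A) : cnv (cnv f g) h = cnv f (cnv g h) := by
  have hB : (LinearMap.mul' k A ∘ₗ TensorProduct.map f (LinearMap.mul' k A ∘ₗ TensorProduct.map g h)) ∘ₗ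
      (TensorProduct.assoc k H H H).toLinearMap =
      LinearMap.mul' k A ∘ₗ TensorProduct.map (LinearMap.mul' k A ∘ₗ TensorProduct.map f g) h := by
    apply TensorProduct.ext_threefold
    intro a b c
    simp [mul_assoc]
  have key1 : TensorProduct.map (cnv f g) h
      = TensorProduct.map (LinearMap.mul' k A ∘ₗ TensorProduct.map f g) h ∘ₗ comul.rTensor H := by
    have := TensorProduct.map_comp (LinearMap.mul' k A ∘ₗ TensorProduct.map f g)
      h (comul (R := k) (A := H)) LinearMap.id
    simpa [cnv, LinearMap.comp_assoc, LinearMap.rTensor] using this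
  have key2 : TensorProduct.map f (cnv g h)
      = TensorProduct.map f (LinearMap.mul' k A ∘ₗ TensorProduct.map g h) ∘ₗ comul.lTensor H := by
    have := TensorProduct.map_comp f
      (LinearMap.mul' k A ∘ₗ TensorProduct.map g h) LinearMap.id (comul (R := k) (A := H))
    simpa [cnv, LinearMap.comp_assoc, LinearMap.lTensor, LinearMap.comp_id] using this
  ext x
  have c := Coalgebra.coassoc_apply (R := k) x
  calc cnv (cnv f g) h x
      = LinearMap.mul' k A (TensorProduct.map (LinearMap.mul' k A ∘ₗ TensorProduct.map f g) h
          (comul.rTensor H (comul x))) := by rw [cnv_apply, key1]; rfl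
    _ = LinearMap.mul' k A (TensorProduct.map f (LinearMap.mul' k A ∘ₗ TensorProduct.map g h)
          ((TensorProduct.assoc k H H H) (comul.rTensor H (comul x)))) := by
        exact (LinearMap.congr_fun hB (comul.rTensor H (comul x))).symm
    _ = cnv f (cnv g h) x := by rw [c, cnv_apply, key2]; rfl


lemma cnv_cunit_left (f : H →ₗ[k] A) : cnv cunit f = f := by
  have key : TensorProduct.map (cunit (k := k) (H := H) (A := A)) f
      = TensorProduct.map (Algebra.linearMap k A) f ∘ₗ counit.rTensor H := by
    have := TensorProduct.map_comp (Algebra.linearMap k A) f (counit (R := k) (A := H))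
      LinearMap.id
    simpa [cunit, LinearMap.rTensor, LinearMap.comp_id] using this
  ext x
  have c := LinearMap.congr_fun (Coalgebra.rTensor_counit_comp_comul (R := k) (A := H)) x
  simp only [cnv_apply, key, LinearMap.comp_apply] at *
  rw [c]
  simp [TensorProduct.mk_apply]

lemma cnv_cunit_right (f : H →ₗ[k] A) : cnv f cunit = f := by
  have key : TensorProduct.map f (cunit (k := k) (H := H) (A := A))
      = TensorProduct.map f (Algebra.linearMap k A) ∘ₗ counit.lTensor H := by
    have := TensorProduct.map_comp f
      (Algebra.linearMap k A) LinearMap.id (counit (R := k) (A := H))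
    simpa [cunit, LinearMap.lTensor, LinearMap.comp_id] using this
  ext x
  have c := LinearMap.congr_fun (Coalgebra.lTensor_counit_comp_comul (R := k) (A := H)) x
  simp only [cnv_apply, key, LinearMap.comp_apply] at *
  rw [c]
  simp

lemma cnv_id_antipode : cnv (LinearMap.id : H →ₗ[k] H) (HopfAlgebra.antipode (R := k)) = cunit := by
  have := HopfAlgebra.mul_antipode_lTensor_comul (R := k) (A := H)
  simpa [cnv, cunit, LinearMap.lTensor] using this

lemma cnv_antipode_id : cnv (HopfAlgebra.antipode (R := k)) (LinearMap.id : H →ₗ[k] H) = cunit := by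
  have := HopfAlgebra.mul_antipode_rTensor_comul (R := k) (A := H)
  simpa [cnv, cunit, LinearMap.rTensor] using this

lemma comp_cnv (φ : A →ₗ[k] B) (hφ : ∀ a b, φ (a * b) = φ a * φ b) (f g : H →ₗ[k] A) :
    φ ∘ₗ cnv f g = cnv (φ ∘ₗ f) (φ ∘ₗ g) := by
  have hm : φ ∘ₗ LinearMap.mul' k A = LinearMap.mul' k B ∘ₗ TensorProduct.map φ φ :=
    TensorProduct.ext' fun a b => by simp [hφ]
  ext x
  have : TensorProduct.map φ φ (TensorProduct.map f g (comul x))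
      = TensorProduct.map (φ ∘ₗ f) (φ ∘ₗ g) (comul x) := by
    rw [← LinearMap.comp_apply, ← TensorProduct.map_comp]
  calc φ (cnv f g x) = (φ ∘ₗ LinearMap.mul' k A) (TensorProduct.map f g (comul x)) := rfl
    _ = LinearMap.mul' k B (TensorProduct.map φ φ (TensorProduct.map f g (comul x))) := by rw [hm]; rfl
    _ = cnv (φ ∘ₗ f) (φ ∘ₗ g) x := by rw [this]; rfl

lemma cnv_comp (ψ : H →ₗ[k] H) (hψ : comul ∘ₗ ψ = TensorProduct.map ψ ψ ∘ₗ comul)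
    (f g : H →ₗ[k] A) : cnv f g ∘ₗ ψ = cnv (f ∘ₗ ψ) (g ∘ₗ ψ) := by
  ext x
  have h1 : comul (R := k) (ψ x) = TensorProduct.map ψ ψ (comul x) := LinearMap.congr_fun hψ x
  have h2 : TensorProduct.map f g (TensorProduct.map ψ ψ (comul x))
      = TensorProduct.map (f ∘ₗ ψ) (g ∘ₗ ψ) (comul x) := by
    rw [← LinearMap.comp_apply, ← TensorProduct.map_comp]
  simp only [LinearMap.comp_apply, cnv_apply, h1, h2]

lemma comp_cunit (φ : A →ₗ[k] B) (hφ1 : φ 1 = 1) : φ ∘ₗ cunit = (cunit : H →ₗ[k] B) := by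
  ext x
  simp [cunit, Algebra.algebraMap_eq_smul_one, map_smul, hφ1]

lemma cunit_comp (ψ : H →ₗ[k] H) (hψ : ∀ x, counit (R := k) (ψ x) = counit x) :
    (cunit : H →ₗ[k] A) ∘ₗ ψ = cunit := by
  ext x
  simp [cunit, hψ]

/-- An "algebra map" `φ` has convolution inverse `φ ∘ S`. -/
lemma cnv_comp_antipode_right (φ : H →ₗ[k] A) (hφ : ∀ a b, φ (a * b) = φ a * φ b)
    (hφ1 : φ 1 = 1) : cnv φ (φ ∘ₗ HopfAlgebra.antipode (R := k)) = cunit := by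
  have := comp_cnv φ hφ LinearMap.id (HopfAlgebra.antipode (R := k))
  rw [cnv_id_antipode, comp_cunit φ hφ1, LinearMap.comp_id] at this
  exact this.symm

lemma cnv_comp_antipode_left (φ : H →ₗ[k] A) (hφ : ∀ a b, φ (a * b) = φ a * φ b)
    (hφ1 : φ 1 = 1) : cnv (φ ∘ₗ HopfAlgebra.antipode (R := k)) φ = cunit := by
  have := comp_cnv φ hφ (HopfAlgebra.antipode (R := k)) LinearMap.id
  rw [cnv_antipode_id, comp_cunit φ hφ1, LinearMap.comp_id] at this
  exact this.symm


lemma antipode_one' : HopfAlgebra.antipode (R := k) (1 : H) = 1 := by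
  have := HopfAlgebra.mul_antipode_rTensor_comul_apply (R := k) (A := H) (1 : H)
  simpa [Algebra.TensorProduct.one_def] using this

/-- `x ↦ x ⊗ 1`. -/
noncomputable def jR : H →ₗ[k] H ⊗[k] H := (TensorProduct.mk k H H).flip 1

/-- `x ↦ 1 ⊗ x`. -/
noncomputable def jL : H →ₗ[k] H ⊗[k] H := TensorProduct.mk k H H 1

@[simp] lemma jR_apply (x : H) : (jR : H →ₗ[k] H ⊗[k] H) x = x ⊗ₜ 1 := rfl
@[simp] lemma jL_apply (x : H) : (jL : H →ₗ[k] H ⊗[k] H) x = 1 ⊗ₜ x := rfl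

lemma jR_mul (a b : H) : (jR : H →ₗ[k] H ⊗[k] H) (a * b) = jR a * jR b := by
  simp [Algebra.TensorProduct.tmul_mul_tmul]

lemma jL_mul (a b : H) : (jL : H →ₗ[k] H ⊗[k] H) (a * b) = jL a * jL b := by
  simp [Algebra.TensorProduct.tmul_mul_tmul]

lemma jR_one : (jR : H →ₗ[k] H ⊗[k] H) 1 = 1 := by
  simp [Algebra.TensorProduct.one_def]

lemma jL_one : (jL : H →ₗ[k] H ⊗[k] H) 1 = 1 := by
  simp [Algebra.TensorProduct.one_def]

lemma cnv_jR_jL_comp (g : H →ₗ[k] H) :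
    cnv jR (jL ∘ₗ g) = TensorProduct.map LinearMap.id g ∘ₗ comul := by
  have hmm : LinearMap.mul' k (H ⊗[k] H) ∘ₗ TensorProduct.map jR jL = LinearMap.id :=
    TensorProduct.ext' fun a b => by
      simp [Algebra.TensorProduct.tmul_mul_tmul]
  have key : TensorProduct.map (jR : H →ₗ[k] H ⊗[k] H) (jL ∘ₗ g)
      = TensorProduct.map jR jL ∘ₗ TensorProduct.map LinearMap.id g := by
    rw [← TensorProduct.map_comp, LinearMap.comp_id]
  ext x
  calc cnv jR (jL ∘ₗ g) x
      = (LinearMap.mul' k (H ⊗[k] H) ∘ₗ TensorProduct.map jR jL)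
          (TensorProduct.map LinearMap.id g (comul x)) := by rw [cnv_apply, key]; rfl
    _ = (TensorProduct.map LinearMap.id g ∘ₗ comul) x := by rw [hmm]; rfl

end Stmt14

open Stmt14 in
theorem stmt_14 {k H : Type*} [CommRing k] [Ring H] [HopfAlgebra k H]
    (gr : ℕ → Submodule k H)
    (hone : (1 : H) ∈ gr 0)
    (hmul : ∀ i j : ℕ, ∀ x ∈ gr i, ∀ y ∈ gr j, x * y ∈ gr (i + j))
    (hsup : (⨆ n, gr n) = ⊤)
    (π : ℕ → (H →ₗ[k] H))
    (hπ_mem : ∀ (n : ℕ) (x : H), π n x ∈ gr n)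
    (hπ_id : ∀ n : ℕ, ∀ x ∈ gr n, π n x = x)
    (hπ_orth : ∀ m n : ℕ, m ≠ n → ∀ x ∈ gr n, π m x = 0)
    (hΔ : ∀ n : ℕ, ∀ x ∈ gr n, comul (R := k) x ∈
      ⨆ p ∈ Finset.HasAntidiagonal.antidiagonal n,
        LinearMap.range (TensorProduct.map (gr p.1).subtype (gr p.2).subtype))
    (hε : ∀ n : ℕ, 0 < n → ∀ x ∈ gr n, counit (R := k) x = 0)
    (hS : ∀ x ∈ gr 0, HopfAlgebra.antipode (R := k) x ∈ gr 0) :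
    let ω : H →ₗ[k] H := LinearMap.mul' k H
      ∘ₗ TensorProduct.map LinearMap.id ((π 0) ∘ₗ HopfAlgebra.antipode (R := k))
      ∘ₗ comul (R := k)
    let R : Submodule k H := LinearMap.ker
      ((TensorProduct.map LinearMap.id (π 0)) ∘ₗ comul (R := k)
        - (TensorProduct.mk k H H).flip 1)
    LinearMap.range ω = R ∧
    (∀ h ∈ R, comul (R := k) h ∈
      LinearMap.range (TensorProduct.map (LinearMap.id : H →ₗ[k] H) R.subtype)) ∧
    (1 : H) ∈ R ∧
    (∀ a ∈ R, ∀ b ∈ R, a * b ∈ R) := by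
  intro ω R
  have hmem_top : ∀ x : H, x ∈ ⨆ n, gr n := fun x => hsup.symm ▸ Submodule.mem_top
  -- basic properties of the degree-0 projection
  have hp_idem : ∀ x : H, π 0 (π 0 x) = π 0 x := fun x => hπ_id 0 _ (hπ_mem 0 x)
  have hp_one : π 0 (1 : H) = 1 := hπ_id 0 1 hone
  have hp_mul : ∀ x y : H, π 0 (x * y) = π 0 x * π 0 y := by
    have base : ∀ i, ∀ x ∈ gr i, ∀ j, ∀ y ∈ gr j, π 0 (x * y) = π 0 x * π 0 y := by
      intro i x hx j y hy
      by_cases hi : i = 0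
      · subst hi
        by_cases hj : j = 0
        · subst hj
          rw [hπ_id 0 _ (hmul 0 0 x hx y hy), hπ_id 0 x hx, hπ_id 0 y hy]
        · rw [hπ_orth 0 _ (by omega) _ (hmul 0 j x hx y hy),
            hπ_orth 0 j (by omega) y hy, mul_zero]
      · rw [hπ_orth 0 (i + j) (by omega) _ (hmul i j x hx y hy),
          hπ_orth 0 i (by omega) x hx, zero_mul]
    intro x y
    refine Submodule.iSup_induction gr (hmem_top x)
      (motive := fun x => π 0 (x * y) = π 0 x * π 0 y) ?_ (by simp) ?_
    · intro i x' hx'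
      refine Submodule.iSup_induction gr (hmem_top y)
        (motive := fun y => π 0 (x' * y) = π 0 x' * π 0 y) ?_ (by simp) ?_
      · intro j y' hy'
        exact base i x' hx' j y' hy'
      · intro y1 y2 h1 h2
        rw [mul_add, map_add, h1, h2, map_add, mul_add]
    · intro x1 x2 h1 h2
      rw [add_mul, map_add, h1, h2, map_add, add_mul]
  have hεp : ∀ x : H, counit (R := k) (π 0 x) = counit (R := k) x := by
    intro x
    refine Submodule.iSup_induction gr (hmem_top x)
      (motive := fun x => counit (R := k) (π 0 x) = counit (R := k) x) ?_ (by simp) ?_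
    · intro n x' hx'
      rcases Nat.eq_zero_or_pos n with h0 | hpos
      · subst h0; rw [hπ_id 0 x' hx']
      · rw [hπ_orth 0 n (by omega) x' hx', hε n hpos x' hx', map_zero]
    · intro a b h1 h2
      rw [map_add, map_add, map_add, h1, h2]
  have hΔp_pt : ∀ x : H, comul (R := k) (π 0 x)
      = TensorProduct.map (π 0) (π 0) (comul (R := k) x) := by
    intro x
    refine Submodule.iSup_induction gr (hmem_top x)
      (motive := fun x => comul (R := k) (π 0 x) = TensorProduct.map (π 0) (π 0) (comul (R := k) x))
      ?_ (by simp) ?_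
    case refine_2 =>
      intro a b h1 h2
      rw [map_add, map_add, h1, h2, map_add (comul (R := k) (A := H)) a b,
        map_add (TensorProduct.map (π 0) (π 0))]
    case refine_1 =>
      intro n x' hx'
      rcases Nat.eq_zero_or_pos n with h0 | hpos
      · subst h0
        rw [hπ_id 0 x' hx']
        have hle : (⨆ q ∈ Finset.HasAntidiagonal.antidiagonal 0,
            LinearMap.range (TensorProduct.map (gr q.1).subtype (gr q.2).subtype))
            ≤ LinearMap.ker (TensorProduct.map (π 0) (π 0) - LinearMap.id) := by
          refine iSup₂_le ?_
          rintro ⟨i, j⟩ hq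
          simp only [Finset.HasAntidiagonal.mem_antidiagonal] at hq
          obtain ⟨hi, hj⟩ : i = 0 ∧ j = 0 := by omega
          subst hi; subst hj
          rw [LinearMap.range_le_ker_iff]
          apply TensorProduct.ext'
          intro a b
          simp [hπ_id 0 _ a.2, hπ_id 0 _ b.2]
        have := hle (hΔ 0 x' hx')
        rw [LinearMap.mem_ker, LinearMap.sub_apply, sub_eq_zero] at this
        exact this.symm
      · rw [hπ_orth 0 n (by omega) x' hx', map_zero]
        have hle : (⨆ q ∈ Finset.HasAntidiagonal.antidiagonal n,
            LinearMap.range (TensorProduct.map (gr q.1).subtype (gr q.2).subtype))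
            ≤ LinearMap.ker (TensorProduct.map (π 0) (π 0)) := by
          refine iSup₂_le ?_
          rintro ⟨i, j⟩ hq
          simp only [Finset.HasAntidiagonal.mem_antidiagonal] at hq
          rw [LinearMap.range_le_ker_iff]
          apply TensorProduct.ext'
          intro a b
          rcases Nat.eq_zero_or_pos i with hi | hi
          · have hj : j ≠ 0 := by omega
            simp [hπ_orth 0 j (by omega) _ b.2]
          · simp [hπ_orth 0 i (by omega) _ a.2]
        have := hle (hΔ n x' hx')
        rw [LinearMap.mem_ker] at this
        exact this.symm
  have hΔp : (comul (R := k) (A := H)) ∘ₗ π 0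
      = TensorProduct.map (π 0) (π 0) ∘ₗ comul (R := k) := by
    ext x; exact hΔp_pt x
  have hpp : (π 0) ∘ₗ (π 0) = π 0 := by ext x; exact hp_idem x
  -- the projection commutes with the antipode
  have hpS_Sp : (π 0) ∘ₗ HopfAlgebra.antipode (R := k)
      = HopfAlgebra.antipode (R := k) ∘ₗ (π 0) := by
    have h1 : cnv ((π 0) ∘ₗ HopfAlgebra.antipode (R := k)) (π 0) = cunit := by
      have := comp_cnv (π 0) hp_mul (HopfAlgebra.antipode (R := k)) LinearMap.id
      rw [cnv_antipode_id, comp_cunit (π 0) hp_one, LinearMap.comp_id] at this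
      exact this.symm
    have h2 : cnv (π 0) (HopfAlgebra.antipode (R := k) ∘ₗ (π 0)) = cunit := by
      have := cnv_comp (π 0) hΔp LinearMap.id (HopfAlgebra.antipode (R := k))
      rw [cnv_id_antipode, cunit_comp (π 0) hεp, LinearMap.id_comp] at this
      exact this.symm
    calc (π 0) ∘ₗ HopfAlgebra.antipode (R := k)
        = cnv ((π 0) ∘ₗ HopfAlgebra.antipode (R := k)) cunit := (cnv_cunit_right _).symm
      _ = cnv ((π 0) ∘ₗ HopfAlgebra.antipode (R := k))
            (cnv (π 0) (HopfAlgebra.antipode (R := k) ∘ₗ (π 0))) := by rw [h2]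
      _ = cnv (cnv ((π 0) ∘ₗ HopfAlgebra.antipode (R := k)) (π 0))
            (HopfAlgebra.antipode (R := k) ∘ₗ (π 0)) := (cnv_assoc _ _ _).symm
      _ = cnv cunit (HopfAlgebra.antipode (R := k) ∘ₗ (π 0)) := by rw [h1]
      _ = HopfAlgebra.antipode (R := k) ∘ₗ (π 0) := cnv_cunit_left _
  -- the "coaction" map δ
  set δ : H →ₗ[k] H ⊗[k] H := TensorProduct.map LinearMap.id (π 0) ∘ₗ comul with hδ_def
  have hmapidp_mul : ∀ u v : H ⊗[k] H,
      TensorProduct.map LinearMap.id (π 0) (u * v)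
      = TensorProduct.map LinearMap.id (π 0) u * TensorProduct.map LinearMap.id (π 0) v := by
    intro u v
    induction u using TensorProduct.induction_on with
    | zero => simp
    | tmul a b =>
      induction v using TensorProduct.induction_on with
      | zero => simp
      | tmul c d => simp [Algebra.TensorProduct.tmul_mul_tmul, hp_mul]
      | add v1 v2 h1 h2 => simp only [mul_add, map_add, h1, h2]
    | add u1 u2 h1 h2 => simp only [add_mul, map_add, h1, h2]
  have hδ_mul : ∀ a b : H, δ (a * b) = δ a * δ b := by
    intro a b
    simp only [hδ_def, LinearMap.comp_apply, Bialgebra.comul_mul, hmapidp_mul]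
  have hδ_one : δ (1 : H) = 1 := by
    simp [hδ_def, Algebra.TensorProduct.one_def, hp_one]
  set φ : H →ₗ[k] H ⊗[k] H := comul ∘ₗ (π 0) with hφ_def
  have hφ_mul : ∀ a b : H, φ (a * b) = φ a * φ b := by
    intro a b
    simp only [hφ_def, LinearMap.comp_apply, hp_mul, Bialgebra.comul_mul]
  have hφ_one : φ (1 : H) = 1 := by simp [hφ_def, hp_one]
  have hjR_mul : ∀ a b : H, (jR (k := k) (H := H)) (a * b) = jR a * jR b :=
    fun a b => jR_mul a b
  have hjR_one : (jR (k := k) (H := H)) (1 : H) = 1 := jR_one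
  have hΔp' : φ = TensorProduct.map (π 0) (π 0) ∘ₗ comul := hφ_def.symm.trans hΔp
  have hδp : δ ∘ₗ (π 0) = φ := by
    have h1 : TensorProduct.map LinearMap.id (π 0) ∘ₗ TensorProduct.map (π 0) (π 0)
        = TensorProduct.map (π 0) (π 0) := by
      rw [← TensorProduct.map_comp, LinearMap.id_comp, hpp]
    calc δ ∘ₗ (π 0)
        = TensorProduct.map LinearMap.id (π 0) ∘ₗ ((comul (R := k) (A := H)) ∘ₗ (π 0)) := by
          rw [hδ_def, LinearMap.comp_assoc]
      _ = TensorProduct.map LinearMap.id (π 0) ∘ₗ (TensorProduct.map (π 0) (π 0) ∘ₗ comul) := by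
          rw [← hφ_def, hΔp']
      _ = (TensorProduct.map LinearMap.id (π 0) ∘ₗ TensorProduct.map (π 0) (π 0)) ∘ₗ comul := by
          rw [LinearMap.comp_assoc]
      _ = TensorProduct.map (π 0) (π 0) ∘ₗ comul := by rw [h1]
      _ = φ := hΔp'.symm
  have hδ_eq : δ = cnv jR (jL ∘ₗ (π 0)) := by
    rw [cnv_jR_jL_comp, hδ_def]
  have hd_eq : (comul : H →ₗ[k] H ⊗[k] H) = cnv jR jL := by
    have := cnv_jR_jL_comp (k := k) (H := H) LinearMap.id
    rw [LinearMap.comp_id, TensorProduct.map_id, LinearMap.id_comp] at this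
    exact this.symm
  have hφinv_r : cnv φ (φ ∘ₗ HopfAlgebra.antipode (R := k)) = cunit :=
    cnv_comp_antipode_right φ hφ_mul hφ_one
  have hφinv_l : cnv (φ ∘ₗ HopfAlgebra.antipode (R := k)) φ = cunit :=
    cnv_comp_antipode_left φ hφ_mul hφ_one
  have ha1 : cnv (cnv (jL ∘ₗ (π 0)) (φ ∘ₗ HopfAlgebra.antipode (R := k))) φ = jL ∘ₗ (π 0) := by
    rw [cnv_assoc, hφinv_l, cnv_cunit_right]
  have ha2 : cnv (jR ∘ₗ ((π 0) ∘ₗ HopfAlgebra.antipode (R := k))) φ = jL ∘ₗ (π 0) := by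
    have e1 : jR ∘ₗ ((π 0) ∘ₗ HopfAlgebra.antipode (R := k))
        = (jR ∘ₗ HopfAlgebra.antipode (R := k)) ∘ₗ (π 0) := by
      rw [hpS_Sp, LinearMap.comp_assoc]
    have e2 : φ = (cnv jR jL) ∘ₗ (π 0) := by rw [hφ_def, hd_eq]
    rw [e1, e2, ← cnv_comp (π 0) hΔp, ← cnv_assoc,
      cnv_comp_antipode_left (jR (k := k) (H := H)) hjR_mul hjR_one, cnv_cunit_left]
  have hs4 : cnv (jL ∘ₗ (π 0)) (φ ∘ₗ HopfAlgebra.antipode (R := k))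
      = jR ∘ₗ ((π 0) ∘ₗ HopfAlgebra.antipode (R := k)) := by
    calc cnv (jL ∘ₗ (π 0)) (φ ∘ₗ HopfAlgebra.antipode (R := k))
        = cnv (cnv (jL ∘ₗ (π 0)) (φ ∘ₗ HopfAlgebra.antipode (R := k))) cunit :=
          (cnv_cunit_right _).symm
      _ = cnv (cnv (jL ∘ₗ (π 0)) (φ ∘ₗ HopfAlgebra.antipode (R := k)))
            (cnv φ (φ ∘ₗ HopfAlgebra.antipode (R := k))) := by rw [hφinv_r]
      _ = cnv (cnv (cnv (jL ∘ₗ (π 0)) (φ ∘ₗ HopfAlgebra.antipode (R := k))) φ)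
            (φ ∘ₗ HopfAlgebra.antipode (R := k)) := (cnv_assoc _ _ _).symm
      _ = cnv (cnv (jR ∘ₗ ((π 0) ∘ₗ HopfAlgebra.antipode (R := k))) φ)
            (φ ∘ₗ HopfAlgebra.antipode (R := k)) := by rw [ha1, ← ha2]
      _ = cnv (jR ∘ₗ ((π 0) ∘ₗ HopfAlgebra.antipode (R := k)))
            (cnv φ (φ ∘ₗ HopfAlgebra.antipode (R := k))) := cnv_assoc _ _ _
      _ = cnv (jR ∘ₗ ((π 0) ∘ₗ HopfAlgebra.antipode (R := k))) cunit := by rw [hφinv_r]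
      _ = jR ∘ₗ ((π 0) ∘ₗ HopfAlgebra.antipode (R := k)) := cnv_cunit_right _
  have hω_eq : ω = cnv LinearMap.id ((π 0) ∘ₗ HopfAlgebra.antipode (R := k)) := rfl
  have hmain : δ ∘ₗ ω = jR ∘ₗ ω := by
    have l1 : δ ∘ₗ ω = cnv δ (φ ∘ₗ HopfAlgebra.antipode (R := k)) := by
      have e : δ ∘ₗ ((π 0) ∘ₗ HopfAlgebra.antipode (R := k))
          = φ ∘ₗ HopfAlgebra.antipode (R := k) := by
        rw [← LinearMap.comp_assoc, hδp]
      rw [hω_eq, comp_cnv δ hδ_mul, LinearMap.comp_id, e]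
    have l4 : cnv jR (jR ∘ₗ ((π 0) ∘ₗ HopfAlgebra.antipode (R := k)))
        = jR ∘ₗ cnv LinearMap.id ((π 0) ∘ₗ HopfAlgebra.antipode (R := k)) := by
      rw [comp_cnv (jR (k := k) (H := H)) hjR_mul, LinearMap.comp_id]
    rw [l1, hδ_eq, cnv_assoc, hs4, l4, ← hω_eq]
  -- membership criterion for R
  have hR_mem : ∀ x : H, x ∈ R ↔
      TensorProduct.map LinearMap.id (π 0) (comul (R := k) x) = x ⊗ₜ[k] (1 : H) := by
    intro x
    rw [show (x ∈ R) = (x ∈ LinearMap.ker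
      ((TensorProduct.map LinearMap.id (π 0)) ∘ₗ comul (R := k)
        - (TensorProduct.mk k H H).flip 1)) from rfl]
    rw [LinearMap.mem_ker, LinearMap.sub_apply, sub_eq_zero, LinearMap.comp_apply]
    rfl
  -- composition fact : ω = γ' ∘ δ pieces
  have hpSp : ((π 0) ∘ₗ HopfAlgebra.antipode (R := k)) ∘ₗ (π 0)
      = (π 0) ∘ₗ HopfAlgebra.antipode (R := k) := by
    rw [hpS_Sp, LinearMap.comp_assoc, hpp]
  have hmapfact : TensorProduct.map (LinearMap.id : H →ₗ[k] H)
        ((π 0) ∘ₗ HopfAlgebra.antipode (R := k))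
      ∘ₗ TensorProduct.map (LinearMap.id : H →ₗ[k] H) (π 0)
      = TensorProduct.map LinearMap.id ((π 0) ∘ₗ HopfAlgebra.antipode (R := k)) := by
    rw [← TensorProduct.map_comp, LinearMap.id_comp, hpSp]
  have hω_apply : ∀ x : H, ω x = LinearMap.mul' k H
      (TensorProduct.map LinearMap.id ((π 0) ∘ₗ HopfAlgebra.antipode (R := k))
        (comul (R := k) x)) := fun x => rfl
  -- R ⊆ range ω : ω fixes R pointwise
  have hω_fix : ∀ h ∈ R, ω h = h := by
    intro h hh
    have hh' := (hR_mem h).mp hh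
    rw [hω_apply]
    rw [← LinearMap.congr_fun hmapfact (comul (R := k) h), LinearMap.comp_apply, hh']
    simp [antipode_one', hp_one]
  have claim1 : LinearMap.range ω = R := by
    apply le_antisymm
    · rintro x ⟨h, rfl⟩
      rw [hR_mem]
      have := LinearMap.congr_fun hmain h
      simp only [LinearMap.comp_apply, hδ_def, jR_apply] at this
      exact this
    · intro h hh
      exact ⟨h, hω_fix h hh⟩
  have claim3 : (1 : H) ∈ R := by
    rw [hR_mem]
    simp [Algebra.TensorProduct.one_def, hp_one]
  have claim4 : ∀ a ∈ R, ∀ b ∈ R, a * b ∈ R := by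
    intro a ha b hb
    rw [hR_mem] at ha hb ⊢
    rw [Bialgebra.comul_mul, hmapidp_mul, ha, hb,
      Algebra.TensorProduct.tmul_mul_tmul, mul_one]
  refine ⟨claim1, ?_, claim3, claim4⟩
  -- the coideal property
  intro h hh
  have hh' := (hR_mem h).mp hh
  -- notation for the associator
  set A : (H ⊗[k] H) ⊗[k] H →ₗ[k] H ⊗[k] (H ⊗[k] H) :=
    (TensorProduct.assoc k H H H).toLinearMap with hA_def
  -- ω factors through δ
  have hωδ : ∀ t : H ⊗[k] H,
      TensorProduct.map (LinearMap.id : H →ₗ[k] H) ω t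
      = TensorProduct.map (LinearMap.id : H →ₗ[k] H)
          (LinearMap.mul' k H ∘ₗ TensorProduct.map LinearMap.id
            ((π 0) ∘ₗ HopfAlgebra.antipode (R := k)))
          (TensorProduct.map (LinearMap.id : H →ₗ[k] H) δ t) := by
    intro t
    rw [← LinearMap.comp_apply, ← TensorProduct.map_comp, LinearMap.id_comp]
    congr 2
    rw [hδ_def, ← LinearMap.comp_assoc]
    ext x
    simp only [LinearMap.comp_apply]
    have e := LinearMap.congr_fun hmapfact (comul (R := k) x)
    simp only [LinearMap.comp_apply] at e
    rw [hω_apply x, e]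
  -- naturality facts
  have n1 : TensorProduct.map (LinearMap.id : H →ₗ[k] H)
        (TensorProduct.map (LinearMap.id : H →ₗ[k] H) (π 0)) ∘ₗ A
      = A ∘ₗ TensorProduct.map (LinearMap.id : H ⊗[k] H →ₗ[k] H ⊗[k] H) (π 0) := by
    apply TensorProduct.ext_threefold
    intro a b c
    simp [hA_def]
  have n2 : TensorProduct.map (LinearMap.id : H ⊗[k] H →ₗ[k] H ⊗[k] H) (π 0)
        ∘ₗ (comul (R := k) (A := H)).rTensor H
      = (comul (R := k) (A := H)).rTensor H
        ∘ₗ TensorProduct.map (LinearMap.id : H →ₗ[k] H) (π 0) := by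
    apply TensorProduct.ext'
    intro a b
    simp [LinearMap.rTensor_tmul]
  -- step 1 : (id ⊗ δ) (comul h) = assoc (comul h ⊗ 1)
  have st1 : TensorProduct.map (LinearMap.id : H →ₗ[k] H) δ (comul (R := k) h)
      = A ((comul (R := k) h) ⊗ₜ[k] (1 : H)) := by
    have e0 : TensorProduct.map (LinearMap.id : H →ₗ[k] H) δ
        = TensorProduct.map (LinearMap.id : H →ₗ[k] H)
            (TensorProduct.map LinearMap.id (π 0))
          ∘ₗ TensorProduct.map (LinearMap.id : H →ₗ[k] H) (comul (R := k)) := by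
      rw [← TensorProduct.map_comp, LinearMap.id_comp, hδ_def]
    have e1 : TensorProduct.map (LinearMap.id : H →ₗ[k] H) (comul (R := k)) (comul (R := k) h)
        = A ((comul (R := k) (A := H)).rTensor H (comul (R := k) h)) :=
      (Coalgebra.coassoc_apply (R := k) h).symm
    rw [e0, LinearMap.comp_apply, e1, ← LinearMap.comp_apply, n1, LinearMap.comp_apply,
      ← LinearMap.comp_apply (TensorProduct.map _ (π 0)), n2, LinearMap.comp_apply, hh',
      LinearMap.rTensor_tmul]
  -- step 2 : (id ⊗ ω) (comul h) = comul h
  have st2 : TensorProduct.map (LinearMap.id : H →ₗ[k] H) ω (comul (R := k) h)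
      = comul (R := k) h := by
    obtain ⟨s, hs⟩ := TensorProduct.exists_finset (comul (R := k) h)
    rw [hωδ, st1, hs]
    simp only [TensorProduct.sum_tmul, map_sum, hA_def, LinearEquiv.coe_coe,
      TensorProduct.assoc_tmul, TensorProduct.map_tmul, LinearMap.id_coe, id_eq,
      LinearMap.comp_apply, LinearMap.mul'_apply, antipode_one', hp_one, mul_one]
  -- conclude
  have hωR : ∀ c : H, ω c ∈ R := fun c => claim1 ▸ LinearMap.mem_range_self ω c
  have hfact2 : TensorProduct.map (LinearMap.id : H →ₗ[k] H) ω
      = TensorProduct.map (LinearMap.id : H →ₗ[k] H) R.subtype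
        ∘ₗ TensorProduct.map (LinearMap.id : H →ₗ[k] H) (ω.codRestrict R hωR) := by
    rw [← TensorProduct.map_comp, LinearMap.id_comp, LinearMap.subtype_comp_codRestrict]
  refine ⟨TensorProduct.map (LinearMap.id : H →ₗ[k] H) (ω.codRestrict R hωR)
    (comul (R := k) h), ?_⟩
  rw [← LinearMap.comp_apply, ← hfact2, st2]
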